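/- arXiv:1209.4053 — 2 statements merged into one kernel-verified Lean document; each statement's English description precedes it below -/
import Mathlib

section
/- Every subset of the family F can be active at at most one local maximal value of G: if x and x' are local maxima of the maximal radius function G with G(x) > 0, G(x') > 0 and with equal active index sets L(x) = L(x'), then G(x) = G(x'). -/
open scoped BigOperators

/-- Euclidean distance between the `i`-th and `j`-th blocks of a configuration
`x ∈ ℝ^{dn}` of `n` points in `ℝ^d`. -/
noncomputable def pairDist (n d : ℕ) (x : EuclideanSpace ℝ (Fin n × Fin d))
    (i j : Fin n) : ℝ :=
  Real.sqrt (∑ k : Fin d, (x (i, k) - x (j, k)) ^ 2)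

/-- Index set for the family `F`: pairs `i < j` (functions `φ_{ij}`), together with
two copies of `Fin n × Fin d` (functions `ψ_{ik}` and `ψ^{ik}`). -/
def Idx (n d : ℕ) : Type :=
  {p : Fin n × Fin n // p.1 < p.2} ⊕ ((Fin n × Fin d) ⊕ (Fin n × Fin d))

/-- The family `F` of functions: `φ_{ij}(x) = |x_i - x_j|/2`, `ψ_{ik}(x) = x_{ik}`,
`ψ^{ik}(x) = 1 - x_{ik}`. -/
noncomputable def famF (n d : ℕ) : Idx n d → EuclideanSpace ℝ (Fin n × Fin d) → ℝ
  | Sum.inl p => fun x => pairDist n d x p.1.1 p.1.2 / 2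
  | Sum.inr (Sum.inl q) => fun x => x q
  | Sum.inr (Sum.inr q) => fun x => 1 - x q

/-- The maximal radius function `G(x) = min_{f ∈ F} f(x)`. -/
noncomputable def maxRad (n d : ℕ) (x : EuclideanSpace ℝ (Fin n × Fin d)) : ℝ :=
  ⨅ l : Idx n d, famF n d l x

/-- `x` is an `r`-admissible configuration: pairwise distances at least `2r` and all
coordinates in `[r, 1-r]`. `M_n^d(r)` is the set of `r`-admissible configurations. -/
def Admissible (n d : ℕ) (r : ℝ) (x : EuclideanSpace ℝ (Fin n × Fin d)) : Prop :=
  (∀ i j : Fin n, i ≠ j → 2 * r ≤ pairDist n d x i j) ∧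
  ∀ q : Fin n × Fin d, r ≤ x q ∧ x q ≤ 1 - r

instance idxFinite (n d : ℕ) : Finite (Idx n d) := by
  unfold Idx; infer_instance

lemma maxRad_le (n d : ℕ) (z : EuclideanSpace ℝ (Fin n × Fin d)) (l : Idx n d) :
    maxRad n d z ≤ famF n d l z :=
  ciInf_le (Set.finite_range _).bddBelow l

lemma exists_maxRad_eq (n d : ℕ) (hn : 2 ≤ n) (hd : 2 ≤ d)
    (z : EuclideanSpace ℝ (Fin n × Fin d)) :
    ∃ l, maxRad n d z = famF n d l z := by
  haveI : Nonempty (Idx n d) :=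
    ⟨Sum.inr (Sum.inl (⟨0, by omega⟩, ⟨0, by omega⟩))⟩
  obtain ⟨l₀, hl₀⟩ := Finite.exists_min (fun l => famF n d l z)
  exact ⟨l₀, le_antisymm (maxRad_le n d z l₀) (le_ciInf hl₀)⟩

lemma pairDist_norm (n d : ℕ) (z : EuclideanSpace ℝ (Fin n × Fin d)) (i j : Fin n) :
    pairDist n d z i j
      = ‖(WithLp.equiv 2 (Fin d → ℝ)).symm (fun k => z (i, k) - z (j, k))‖ := by
  rw [EuclideanSpace.norm_eq]
  unfold pairDist
  congr 1
  refine Finset.sum_congr rfl fun k _ => ?_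
  rw [WithLp.equiv_symm_apply, PiLp.toLp_apply, Real.norm_eq_abs, sq_abs]

lemma famF_continuous (n d : ℕ) (l : Idx n d) : Continuous (famF n d l) := by
  match l with
  | Sum.inl p =>
      show Continuous fun z => pairDist n d z p.1.1 p.1.2 / 2
      apply Continuous.div_const
      unfold pairDist
      apply Real.continuous_sqrt.comp
      apply continuous_finset_sum
      intro k _
      exact (((EuclideanSpace.proj ((p.1.1, k) : Fin n × Fin d)).continuous).sub
        ((EuclideanSpace.proj ((p.1.2, k) : Fin n × Fin d)).continuous)).pow 2
  | Sum.inr (Sum.inl q) =>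
      exact (EuclideanSpace.proj q).continuous
  | Sum.inr (Sum.inr q) =>
      exact continuous_const.sub (EuclideanSpace.proj q).continuous

/-- Key direction: equal active sets force `G(x) ≤ G(x')`. -/
lemma maxRad_key (n d : ℕ) (hn : 2 ≤ n) (hd : 2 ≤ d)
    (x x' : EuclideanSpace ℝ (Fin n × Fin d))
    (hx : IsLocalMax (maxRad n d) x)
    (hactive : {l : Idx n d | famF n d l x = maxRad n d x}
      = {l : Idx n d | famF n d l x' = maxRad n d x'}) :
    maxRad n d x ≤ maxRad n d x' := by
  by_contra hlt
  push_neg at hlt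
  set r := maxRad n d x with hr
  set r' := maxRad n d x' with hr'
  set y : ℝ → EuclideanSpace ℝ (Fin n × Fin d) := fun t => x + t • (x - x') with hy
  have hyq : ∀ (t : ℝ) q, y t q = x q + t * (x q - x' q) := by
    intro t q
    simp [hy, PiLp.add_apply, PiLp.smul_apply, PiLp.sub_apply, smul_eq_mul]
  have hy0 : y 0 = x := by simp [hy]
  have hycont : Continuous y := by
    exact continuous_const.add (continuous_id.smul continuous_const)
  -- eventually all members of the family exceed r along y for t > 0 small
  have hev : ∀ᶠ t in nhdsWithin (0:ℝ) (Set.Ioi 0), ∀ l : Idx n d, r < famF n d l (y t) := by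
    rw [Filter.eventually_all]
    intro l
    by_cases hl : famF n d l x = r
    · -- active index: holds for all t > 0
      have hl' : famF n d l x' = r' := (Set.ext_iff.mp hactive l).mp hl
      filter_upwards [self_mem_nhdsWithin] with t ht
      replace ht : (0:ℝ) < t := ht
      match l with
      | Sum.inr (Sum.inl q) =>
          show r < y t q
          have h1 : x q = r := hl
          have h2 : x' q = r' := hl'
          rw [hyq, h1, h2]
          nlinarith
      | Sum.inr (Sum.inr q) =>
          show r < 1 - y t q
          have h1 : 1 - x q = r := hl
          have h2 : 1 - x' q = r' := hl'
          rw [hyq]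
          nlinarith
      | Sum.inl p =>
          show r < pairDist n d (y t) p.1.1 p.1.2 / 2
          set i := p.1.1
          set j := p.1.2
          set A : EuclideanSpace ℝ (Fin d) :=
            (WithLp.equiv 2 (Fin d → ℝ)).symm (fun k => x (i, k) - x (j, k)) with hA
          set C : EuclideanSpace ℝ (Fin d) :=
            (WithLp.equiv 2 (Fin d → ℝ)).symm (fun k => x' (i, k) - x' (j, k)) with hC
          have hnA : ‖A‖ = 2 * r := by
            have : pairDist n d x i j / 2 = r := hl
            rw [pairDist_norm] at this
            rw [← hA] at this
            linarith
          have hnC : ‖C‖ = 2 * r' := by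
            have : pairDist n d x' i j / 2 = r' := hl'
            rw [pairDist_norm] at this
            rw [← hC] at this
            linarith
          have hvec : (WithLp.equiv 2 (Fin d → ℝ)).symm
              (fun k => (y t) (i, k) - (y t) (j, k)) = (1 + t) • A - t • C := by
            ext k
            simp only [hA, hC, PiLp.sub_apply, PiLp.smul_apply, smul_eq_mul,
              WithLp.equiv_symm_apply, PiLp.toLp_apply, hyq]
            ring
          have hpd : pairDist n d (y t) i j = ‖(1 + t) • A - t • C‖ := by
            rw [pairDist_norm, hvec]
          have hge : ‖(1 + t) • A‖ - ‖t • C‖ ≤ ‖(1 + t) • A - t • C‖ :=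
            norm_sub_norm_le _ _
          have hnA' : ‖(1 + t) • A‖ = (1 + t) * (2 * r) := by
            rw [norm_smul, Real.norm_eq_abs, abs_of_pos (by linarith), hnA]
          have hnC' : ‖t • C‖ = t * (2 * r') := by
            rw [norm_smul, Real.norm_eq_abs, abs_of_pos ht, hnC]
          rw [hpd]
          rw [hnA', hnC'] at hge
          nlinarith
    · -- inactive index: continuity
      have hgt : r < famF n d l x := lt_of_le_of_ne (maxRad_le n d x l) (Ne.symm hl)
      have hc : Filter.Tendsto (fun t => famF n d l (y t)) (nhds 0) (nhds (famF n d l x)) := by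
        have := ((famF_continuous n d l).comp hycont).tendsto 0
        rwa [Function.comp, hy0] at this
      exact (hc.eventually (eventually_gt_nhds hgt)).filter_mono nhdsWithin_le_nhds
  -- local maximality gives the contradiction
  have hev2 : ∀ᶠ t in nhdsWithin (0:ℝ) (Set.Ioi 0), maxRad n d (y t) ≤ r := by
    have hyt : Filter.Tendsto y (nhds 0) (nhds x) := by
      have := hycont.tendsto 0
      rwa [hy0] at this
    exact (hyt.eventually hx).filter_mono nhdsWithin_le_nhds
  obtain ⟨t, h1, h2⟩ := (hev.and hev2).exists
  obtain ⟨l₀, hl₀⟩ := exists_maxRad_eq n d hn hd (y t)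
  have := h1 l₀
  rw [← hl₀] at this
  linarith

/-- Every subset of the family `F` can be active at at most one local maximal value
of `G`: two local maxima with positive value and equal active index sets have equal
values. -/
theorem active_set_determines_value (n d : ℕ) (hn : 2 ≤ n) (hd : 2 ≤ d)
    (x x' : EuclideanSpace ℝ (Fin n × Fin d))
    (hx : IsLocalMax (maxRad n d) x) (hx' : IsLocalMax (maxRad n d) x')
    (hpos : 0 < maxRad n d x) (hpos' : 0 < maxRad n d x')
    (hactive : {l : Idx n d | famF n d l x = maxRad n d x}
      = {l : Idx n d | famF n d l x' = maxRad n d x'}) :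
    maxRad n d x = maxRad n d x' :=
  le_antisymm (maxRad_key n d hn hd x x' hx hactive)
    (maxRad_key n d hn hd x' x hx' hactive.symm)
end

section
/- For every k ≥ 1 and d ≥ 2, the cubic grid configuration of n = k^d points in [0,1]^d whose coordinates are the centers ((2a_1 − 1)/(2k), …, (2a_d − 1)/(2k)) for a ∈ {1,…,k}^d satisfies G(grid) = 1/(2k), and this configuration is a local maximum of the maximal radius function G; hence the packing fraction n·ω_d·G^d = ω_d/2^d is realized by jammed packings of k^d spheres for every k. -/
open scoped BigOperators

instance (n d : ℕ) : Fintype (Idx n d) := by unfold Idx; infer_instance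

lemma bdd (n d : ℕ) (x : EuclideanSpace ℝ (Fin n × Fin d)) :
    BddBelow (Set.range (fun l => famF n d l x)) :=
  (Set.finite_range _).bddBelow

lemma pairDist_symm (n d : ℕ) (x : EuclideanSpace ℝ (Fin n × Fin d)) (i j : Fin n) :
    pairDist n d x i j = pairDist n d x j i := by
  unfold pairDist; congr 1; apply Finset.sum_congr rfl; intro l _; ring

lemma pairDist_nonneg (n d : ℕ) (x : EuclideanSpace ℝ (Fin n × Fin d)) (i j : Fin n) :
    0 ≤ pairDist n d x i j := Real.sqrt_nonneg _

lemma maxRad_le_pairDist (n d : ℕ) (x : EuclideanSpace ℝ (Fin n × Fin d))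
    (i j : Fin n) (hij : i ≠ j) : maxRad n d x ≤ pairDist n d x i j / 2 := by
  rcases lt_or_gt_of_ne hij with h | h
  · exact ciInf_le (bdd n d x) (Sum.inl ⟨(i, j), h⟩)
  · have := ciInf_le (bdd n d x) (Sum.inl ⟨(j, i), h⟩)
    rw [pairDist_symm n d x i j]; exact this

lemma maxRad_le_coord (n d : ℕ) (x : EuclideanSpace ℝ (Fin n × Fin d))
    (q : Fin n × Fin d) : maxRad n d x ≤ x q :=
  ciInf_le (bdd n d x) (Sum.inr (Sum.inl q))

lemma maxRad_le_one_sub (n d : ℕ) (x : EuclideanSpace ℝ (Fin n × Fin d))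
    (q : Fin n × Fin d) : maxRad n d x ≤ 1 - x q :=
  ciInf_le (bdd n d x) (Sum.inr (Sum.inr q))

lemma abs_apply_le_dist {n d : ℕ} (x y : EuclideanSpace ℝ (Fin n × Fin d))
    (q : Fin n × Fin d) : |x q - y q| ≤ dist x y := by
  rw [EuclideanSpace.dist_eq]
  rw [← Real.sqrt_sq_eq_abs]
  have hle : (x q - y q) ^ 2 ≤ ∑ l : Fin n × Fin d, dist (x l) (y l) ^ 2 := by
    have : (x q - y q) ^ 2 = dist (x q) (y q) ^ 2 := by
      rw [Real.dist_eq, sq_abs]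
    rw [this]
    exact Finset.single_le_sum (f := fun l => dist (x l) (y l) ^ 2)
      (fun l _ => sq_nonneg _) (Finset.mem_univ q)
  exact Real.sqrt_le_sqrt hle

lemma key_ineq (r s diff : ℝ) (hr : 0 < r) (hs0 : 0 ≤ s) (hs : s ≤ 4*r^2)
    (hd0 : 0 ≤ diff) (hd : 4*r^2 - s ≤ diff^2) : 2*r - s/(2*r) ≤ diff := by
  rcases le_or_gt (2*r - s/(2*r)) 0 with h | h
  · linarith
  · by_contra hc
    push_neg at hc
    have h2 : diff^2 < (2*r - s/(2*r))^2 := by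
      apply pow_lt_pow_left₀ hc hd0
      · norm_num
    have h3 : (2*r - s/(2*r))^2 ≤ 4*r^2 - s := by
      have h5 : 2*r*(s/(2*r)) = s := by field_simp
      have h4 : (s/(2*r))^2 ≤ s := by
        rw [div_pow]
        rw [div_le_iff₀ (by positivity)]
        nlinarith
      nlinarith
    linarith

lemma chain_lower {d k n : ℕ} (e : Fin n ≃ (Fin d → Fin k))
    (grid x : EuclideanSpace ℝ (Fin n × Fin d))
    (hgrid : ∀ q : Fin n × Fin d, grid q = (2 * ((e q.1 q.2 : ℕ) : ℝ) + 1) / (2 * k))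
    (r D : ℝ) (hk : 1 ≤ k) (hrk : 1/(2*(k:ℝ)) ≤ r)
    (hpair : ∀ i j : Fin n, i ≠ j → 2*r ≤ pairDist n d x i j)
    (hlow : ∀ q, r ≤ x q)
    (hD0 : 0 ≤ D) (hDk : 2*D < 1/(k:ℝ))
    (hDd : 4*((d:ℝ)-1)*D^2 ≤ 4*r^2)
    (hdev : ∀ q, |x q - grid q| ≤ D) :
    ∀ (i : Fin n) (m : Fin d),
      (2*((e i m : ℕ):ℝ)+1)*r - ((e i m : ℕ):ℝ)*(2*((d:ℝ)-1)*D^2/r) ≤ x (i, m) := by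
  have hk0 : 0 < (k:ℝ) := by exact_mod_cast hk
  have hr0 : 0 < r := lt_of_lt_of_le (by positivity) hrk
  suffices H : ∀ a : ℕ, ∀ (i : Fin n) (m : Fin d), (e i m : ℕ) = a →
      (2*((e i m : ℕ):ℝ)+1)*r - ((e i m : ℕ):ℝ)*(2*((d:ℝ)-1)*D^2/r) ≤ x (i, m) by
    exact fun i m => H _ i m rfl
  intro a
  induction a with
  | zero =>
    intro i m h
    rw [h]
    simpa using hlow (i, m)
  | succ a ih =>
    intro i m h
    have hd1 : 0 < d := m.pos
    have hdr : (1:ℝ) ≤ (d:ℝ) := by exact_mod_cast hd1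
    have hak : a + 1 < k := by rw [← h]; exact (e i m).isLt
    set b : Fin k := ⟨a, by omega⟩ with hb
    set j : Fin n := e.symm (Function.update (e i) m b) with hj
    have hej : e j = Function.update (e i) m b := e.apply_symm_apply _
    have hejm : (e j m : ℕ) = a := by rw [hej, Function.update_self]
    have hne : i ≠ j := by
      intro hij
      rw [hij, hejm] at h
      omega
    -- lateral coordinate bounds
    have hlat : ∀ l : Fin d, l ≠ m → (x (i,l) - x (j,l))^2 ≤ 4*D^2 := by
      intro l hl
      have hgl : grid (j,l) = grid (i,l) := by
        rw [hgrid, hgrid]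
        have : e j l = e i l := by rw [hej, Function.update_of_ne hl]
        simp [this]
      have h1 := hdev (i,l); have h2 := hdev (j,l)
      rw [abs_le] at h1 h2
      have habs : (x (i,l) - x (j,l))^2 ≤ (2*D)^2 := by
        apply sq_le_sq'
        · rw [hgl] at h2; linarith
        · rw [hgl] at h2; linarith
      nlinarith
    -- sum bound
    have hsum : 4*r^2 ≤ ∑ l : Fin d, (x (i,l) - x (j,l))^2 := by
      have hp := hpair i j hne
      have hS0 : 0 ≤ ∑ l : Fin d, (x (i,l) - x (j,l))^2 :=
        Finset.sum_nonneg (fun l _ => sq_nonneg _)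
      have h2 : (2*r)^2 ≤ (pairDist n d x i j)^2 :=
        pow_le_pow_left₀ (by linarith) hp 2
      unfold pairDist at h2
      rw [Real.sq_sqrt hS0] at h2
      linarith
    have herase : ∑ l ∈ Finset.univ.erase m, (x (i,l) - x (j,l))^2
        ≤ ((d:ℝ)-1) * (4*D^2) := by
      have hcard : (Finset.univ.erase m).card = d - 1 := by
        rw [Finset.card_erase_of_mem (Finset.mem_univ m), Finset.card_univ,
          Fintype.card_fin]
      calc ∑ l ∈ Finset.univ.erase m, (x (i,l) - x (j,l))^2
          ≤ (Finset.univ.erase m).card • (4*D^2) := by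
            apply Finset.sum_le_card_nsmul
            intro l hl
            exact hlat l (Finset.ne_of_mem_erase hl)
        _ = ((d:ℝ)-1) * (4*D^2) := by
            rw [nsmul_eq_mul, hcard]
            congr 1
            have : ((d - 1 : ℕ) : ℝ) = (d:ℝ) - 1 := by
              have : 1 ≤ d := hd1
              push_cast [Nat.cast_sub this]
              ring
            exact this
    have hsplit : (∑ l ∈ Finset.univ.erase m, (x (i,l) - x (j,l))^2)
        + (x (i,m) - x (j,m))^2 = ∑ l : Fin d, (x (i,l) - x (j,l))^2 :=
      Finset.sum_erase_add _ _ (Finset.mem_univ m)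
    have hdsq : 4*r^2 - 4*((d:ℝ)-1)*D^2 ≤ (x (i,m) - x (j,m))^2 := by
      nlinarith
    -- positivity of the gap
    have hgap : grid (i,m) - grid (j,m) = 1/(k:ℝ) := by
      rw [hgrid, hgrid]
      simp only [h, hejm]
      push_cast
      rw [div_sub_div_same]
      rw [show (2 * ((a:ℝ)+1) + 1) - (2*(a:ℝ)+1) = 2 by ring]
      rw [div_eq_div_iff (by positivity) (ne_of_gt hk0)]
      ring
    have hdpos : 0 ≤ x (i,m) - x (j,m) := by
      have h1 := hdev (i,m); have h2 := hdev (j,m)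
      rw [abs_le] at h1 h2
      have : 1/(k:ℝ) - 2*D ≤ x (i,m) - x (j,m) := by linarith
      linarith
    have hkey := key_ineq r (4*((d:ℝ)-1)*D^2) (x (i,m) - x (j,m)) hr0
      (by nlinarith) hDd hdpos hdsq
    have ht : 4*((d:ℝ)-1)*D^2/(2*r) = 2*((d:ℝ)-1)*D^2/r := by
      field_simp
      ring
    rw [ht] at hkey
    have hih := ih j m hejm
    rw [hejm] at hih
    rw [h]
    push_cast
    linarith

lemma chain_upper {d k n : ℕ} (e : Fin n ≃ (Fin d → Fin k))
    (grid x : EuclideanSpace ℝ (Fin n × Fin d))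
    (hgrid : ∀ q : Fin n × Fin d, grid q = (2 * ((e q.1 q.2 : ℕ) : ℝ) + 1) / (2 * k))
    (r D : ℝ) (hk : 1 ≤ k) (hrk : 1/(2*(k:ℝ)) ≤ r)
    (hpair : ∀ i j : Fin n, i ≠ j → 2*r ≤ pairDist n d x i j)
    (hhigh : ∀ q, x q ≤ 1 - r)
    (hD0 : 0 ≤ D) (hDk : 2*D < 1/(k:ℝ))
    (hDd : 4*((d:ℝ)-1)*D^2 ≤ 4*r^2)
    (hdev : ∀ q, |x q - grid q| ≤ D) :
    ∀ (i : Fin n) (m : Fin d),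
      (2*((k - 1 - (e i m : ℕ) : ℕ):ℝ)+1)*r
        - ((k - 1 - (e i m : ℕ) : ℕ):ℝ)*(2*((d:ℝ)-1)*D^2/r) ≤ 1 - x (i, m) := by
  have hk0 : 0 < (k:ℝ) := by exact_mod_cast hk
  set e' : Fin n ≃ (Fin d → Fin k) :=
    e.trans (Equiv.piCongrRight (fun _ : Fin d => Fin.revPerm)) with he'
  have he'val : ∀ (i : Fin n) (m : Fin d), (e' i m : ℕ) = k - 1 - (e i m : ℕ) := by
    intro i m
    simp [he', Equiv.piCongrRight, Fin.revPerm, Fin.val_rev]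
    omega
  set x' : EuclideanSpace ℝ (Fin n × Fin d) := WithLp.toLp 2 (fun q => 1 - x q) with hx'
  set grid' : EuclideanSpace ℝ (Fin n × Fin d) := WithLp.toLp 2 (fun q => 1 - grid q) with hgrid'
  have hgrid'' : ∀ q : Fin n × Fin d,
      grid' q = (2 * ((e' q.1 q.2 : ℕ) : ℝ) + 1) / (2 * k) := by
    intro q
    have hak : (e q.1 q.2 : ℕ) < k := (e q.1 q.2).isLt
    have hcast : ((k - 1 - (e q.1 q.2 : ℕ) : ℕ) : ℝ) = (k:ℝ) - 1 - (e q.1 q.2 : ℕ) := by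
      have h1 : (k - 1 - (e q.1 q.2 : ℕ) : ℕ) + 1 + (e q.1 q.2 : ℕ) = k := by omega
      have := congrArg (fun t : ℕ => (t:ℝ)) h1
      push_cast at this
      linarith
    show 1 - grid q = _
    rw [hgrid q, he'val, hcast]
    field_simp
    ring
  have hpair' : ∀ i j : Fin n, i ≠ j → 2*r ≤ pairDist n d x' i j := by
    intro i j hij
    have : pairDist n d x' i j = pairDist n d x i j := by
      unfold pairDist
      congr 1
      apply Finset.sum_congr rfl
      intro l _
      show ((1 - x (i,l)) - (1 - x (j,l)))^2 = _
      ring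
    rw [this]; exact hpair i j hij
  have hlow' : ∀ q, r ≤ x' q := fun q => by
    have := hhigh q; show r ≤ 1 - x q; linarith
  have hdev' : ∀ q, |x' q - grid' q| ≤ D := fun q => by
    have : x' q - grid' q = -(x q - grid q) := by show (1 - x q) - (1 - grid q) = _; ring
    rw [this, abs_neg]; exact hdev q
  have := chain_lower e' grid' x' hgrid'' r D hk hrk hpair' hlow' hD0 hDk hDd hdev' 
  intro i m
  have h2 := this i m
  rw [he'val] at h2
  exact h2

lemma dev_bound {d k n : ℕ} (e : Fin n ≃ (Fin d → Fin k))
    (grid x : EuclideanSpace ℝ (Fin n × Fin d))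
    (hgrid : ∀ q : Fin n × Fin d, grid q = (2 * ((e q.1 q.2 : ℕ) : ℝ) + 1) / (2 * k))
    (r D : ℝ) (hk : 1 ≤ k) (hrk : 1/(2*(k:ℝ)) ≤ r)
    (hpair : ∀ i j : Fin n, i ≠ j → 2*r ≤ pairDist n d x i j)
    (hlow : ∀ q, r ≤ x q) (hhigh : ∀ q, x q ≤ 1 - r)
    (hD0 : 0 ≤ D) (hDk : 2*D < 1/(k:ℝ))
    (hDd : 4*((d:ℝ)-1)*D^2 ≤ 4*r^2)
    (hdev : ∀ q, |x q - grid q| ≤ D) :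
    ∀ q : Fin n × Fin d,
      |x q - grid q| ≤ 4*(k:ℝ)*((k:ℝ)-1)*((d:ℝ)-1)*D^2 := by
  have hk0 : 0 < (k:ℝ) := by exact_mod_cast hk
  have hr0 : 0 < r := lt_of_lt_of_le (by positivity) hrk
  intro q
  obtain ⟨i, m⟩ := q
  have hd1 : 0 < d := m.pos
  have hdr : (1:ℝ) ≤ (d:ℝ) := by exact_mod_cast hd1
  have hL := chain_lower e grid x hgrid r D hk hrk hpair hlow hD0 hDk hDd hdev i m
  have hU := chain_upper e grid x hgrid r D hk hrk hpair hhigh hD0 hDk hDd hdev i m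
  set a : ℕ := (e i m : ℕ) with ha
  have hak : a < k := (e i m).isLt
  have hcast : ((k - 1 - a : ℕ) : ℝ) = (k:ℝ) - 1 - (a:ℝ) := by
    have h1 : (k - 1 - a : ℕ) + 1 + a = k := by omega
    have := congrArg (fun t : ℕ => (t:ℝ)) h1
    push_cast at this
    linarith
  rw [hcast] at hU
  set A : ℝ := (a:ℝ) with hA
  have hA0 : 0 ≤ A := Nat.cast_nonneg a
  have hAk : A ≤ (k:ℝ) - 1 := by
    have : a + 1 ≤ k := hak
    have := (Nat.cast_le (α := ℝ)).2 this
    push_cast at this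
    linarith
  set t : ℝ := 2*((d:ℝ)-1)*D^2/r with hT
  have hnum0 : (0:ℝ) ≤ 2*((d:ℝ)-1)*D^2 := by nlinarith [sq_nonneg D]
  have ht0 : 0 ≤ t := by
    rw [hT]; exact div_nonneg hnum0 hr0.le
  have htle : t ≤ 4*(k:ℝ)*((d:ℝ)-1)*D^2 := by
    rw [hT, div_le_iff₀ hr0]
    have hx : (1:ℝ) ≤ r * (2*(k:ℝ)) := (div_le_iff₀ (by positivity)).1 hrk
    nlinarith [mul_le_mul_of_nonneg_left hx hnum0]
  have hgq : grid (i, m) = (2*A+1) * (1/(2*(k:ℝ))) := by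
    rw [hgrid]
    field_simp
    rfl
  have hAt : A * t ≤ 4*(k:ℝ)*((k:ℝ)-1)*((d:ℝ)-1)*D^2 := by
    have h1 : A * t ≤ ((k:ℝ)-1) * (4*(k:ℝ)*((d:ℝ)-1)*D^2) := by
      apply mul_le_mul hAk htle ht0
      linarith
    linarith [h1]
  have hBt : ((k:ℝ) - 1 - A) * t ≤ 4*(k:ℝ)*((k:ℝ)-1)*((d:ℝ)-1)*D^2 := by
    have h1 : ((k:ℝ) - 1 - A) * t ≤ ((k:ℝ)-1) * (4*(k:ℝ)*((d:ℝ)-1)*D^2) := by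
      apply mul_le_mul (by linarith) htle ht0
      linarith
    linarith [h1]
  rw [abs_le, hgq]
  have hkr : 2*(k:ℝ) * (1/(2*(k:ℝ))) = 1 := by field_simp
  constructor
  · -- lower:  grid - E ≤ x
    have h1 : (2*A+1) * (1/(2*(k:ℝ))) ≤ (2*A+1) * r := by
      apply mul_le_mul_of_nonneg_left hrk
      linarith
    linarith [hL, h1, hAt]
  · -- upper
    have h2 : (2*((k:ℝ)-1-A)+1) * (1/(2*(k:ℝ))) ≤ (2*((k:ℝ)-1-A)+1) * r := by
      apply mul_le_mul_of_nonneg_left hrk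
      linarith
    linarith [hU, h2, hBt, hkr]


set_option maxHeartbeats 1000000

/-- The cubic grid of `n = k^d` points with coordinates `(2a+1)/(2k)`, `a ∈ {0,…,k-1}`,
satisfies `G(grid) = 1/(2k)`, is a local maximum of `G`, and realizes the packing
fraction `n ⬝ ω_d ⬝ G^d = ω_d / 2^d`. -/
theorem grid_is_jammed (d k : ℕ) (hd : 2 ≤ d) (hk : 1 ≤ k) (n : ℕ) (hn : n = k ^ d)
    (e : Fin n ≃ (Fin d → Fin k)) (grid : EuclideanSpace ℝ (Fin n × Fin d))
    (hgrid : ∀ q : Fin n × Fin d,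
      grid q = (2 * ((e q.1 q.2 : ℕ) : ℝ) + 1) / (2 * k)) :
    maxRad n d grid = 1 / (2 * k) ∧
    IsLocalMax (maxRad n d) grid ∧
    (n : ℝ) * (MeasureTheory.volume
        (Metric.closedBall (0 : EuclideanSpace ℝ (Fin d)) 1)).toReal
        * maxRad n d grid ^ d
      = (MeasureTheory.volume
        (Metric.closedBall (0 : EuclideanSpace ℝ (Fin d)) 1)).toReal / 2 ^ d := by
  have hk0 : 0 < (k:ℝ) := by exact_mod_cast hk
  have hdpos : 0 < d := by omega
  have hdr : (2:ℝ) ≤ (d:ℝ) := by exact_mod_cast hd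
  have hnpos : 0 < n := by rw [hn]; exact Nat.one_le_pow d k hk
  set i0 : Fin n := e.symm (fun _ => ⟨0, hk⟩) with hi0
  set m0 : Fin d := ⟨0, hdpos⟩ with hm0
  haveI : Nonempty (Idx n d) := ⟨Sum.inr (Sum.inl (i0, m0))⟩
  -- Part 1 : value of maxRad at grid
  have hval : maxRad n d grid = 1 / (2 * k) := by
    apply le_antisymm
    · have hle := maxRad_le_coord n d grid (i0, m0)
      rw [hgrid] at hle
      have he0 : e i0 m0 = ⟨0, hk⟩ := by
        show e (e.symm _) m0 = _
        rw [e.apply_symm_apply]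
      rw [he0] at hle
      simpa using hle
    · apply le_ciInf
      intro l
      rcases l with ⟨⟨i, j⟩, hij⟩ | q | q
      · -- pair distance
        show 1 / (2*(k:ℝ)) ≤ pairDist n d grid i j / 2
        have hne : i ≠ j := ne_of_lt hij
        have hem : ∃ m : Fin d, e i m ≠ e j m := by
          by_contra hcon
          push_neg at hcon
          exact hne (e.injective (funext hcon))
        obtain ⟨m, hm⟩ := hem
        have hab : (e i m : ℕ) ≠ (e j m : ℕ) := fun hc => hm (Fin.ext hc)
        have habs : 1/(k:ℝ) ≤ |grid (i,m) - grid (j,m)| := by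
          rw [hgrid (i,m), hgrid (j,m)]
          set a : ℕ := (e i m : ℕ)
          set b : ℕ := (e j m : ℕ)
          have h1 : (1:ℝ) ≤ |(a:ℝ) - (b:ℝ)| := by
            rcases Nat.lt_or_ge a b with hlt | hge
            · have : (a:ℝ) + 1 ≤ b := by exact_mod_cast hlt
              rw [abs_sub_comm, abs_of_nonneg (by linarith)]
              linarith
            · have hgt : b < a := lt_of_le_of_ne hge (Ne.symm hab)
              have : (b:ℝ) + 1 ≤ a := by exact_mod_cast hgt
              rw [abs_of_nonneg (by linarith)]
              linarith
          rw [div_sub_div_same]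
          rw [show (2*((a:ℕ):ℝ)+1) - (2*((b:ℕ):ℝ)+1) = 2*((a:ℝ)-(b:ℝ)) by push_cast; ring]
          rw [abs_div, abs_mul, abs_two, abs_of_pos (by positivity : (0:ℝ) < 2*(k:ℝ))]
          rw [show (2:ℝ)*(k:ℝ) = 2*(k:ℝ) by rfl, mul_div_mul_left _ _ (two_ne_zero)]
          rw [div_le_div_iff₀ hk0 hk0]
          nlinarith [h1, abs_nonneg ((a:ℝ) - (b:ℝ))]
        have hpd : |grid (i,m) - grid (j,m)| ≤ pairDist n d grid i j := by
          unfold pairDist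
          rw [← Real.sqrt_sq_eq_abs]
          apply Real.sqrt_le_sqrt
          exact Finset.single_le_sum
            (f := fun l => (grid (i,l) - grid (j,l))^2)
            (fun l _ => sq_nonneg _) (Finset.mem_univ m)
        have : 1/(k:ℝ) ≤ pairDist n d grid i j := le_trans habs hpd
        rw [le_div_iff₀ (by norm_num : (0:ℝ) < 2)]
        calc 1/(2*(k:ℝ)) * 2 = 1/(k:ℝ) := by field_simp
          _ ≤ pairDist n d grid i j := this
      · -- lower wall
        show 1 / (2*(k:ℝ)) ≤ grid q
        rw [hgrid]
        rw [div_le_div_iff₀ (by positivity) (by positivity)]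
        have : (0:ℝ) ≤ ((e q.1 q.2 : ℕ) : ℝ) := Nat.cast_nonneg _
        nlinarith
      · -- upper wall
        show 1 / (2*(k:ℝ)) ≤ 1 - grid q
        rw [hgrid, le_sub_iff_add_le, ← add_div, div_le_one (by positivity)]
        have hlt : (e q.1 q.2 : ℕ) < k := (e q.1 q.2).isLt
        have : ((e q.1 q.2 : ℕ) : ℝ) + 1 ≤ (k:ℝ) := by exact_mod_cast hlt
        linarith
  refine ⟨hval, ?_, ?_⟩
  · -- Part 2 : local maximum
    set C : ℝ := 4*(k:ℝ)*((k:ℝ)-1)*((d:ℝ)-1) with hC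
    have hC0 : 0 ≤ C := by
      have h1 : (1:ℝ) ≤ (k:ℝ) := by exact_mod_cast hk
      rw [hC]
      have h2 := mul_nonneg (mul_nonneg (by positivity : (0:ℝ) ≤ 4*(k:ℝ))
        (by linarith : (0:ℝ) ≤ (k:ℝ)-1)) (by linarith : (0:ℝ) ≤ (d:ℝ)-1)
      linarith
    set ε : ℝ := min (1/(2*(k:ℝ)*(d:ℝ)*2)) (1/(C+1)) with hε
    have hεpos : 0 < ε := by
      apply lt_min
      · positivity
      · positivity
    rw [IsLocalMax, IsMaxFilter]
    filter_upwards [Metric.ball_mem_nhds grid hεpos] with x hx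
    rw [Metric.mem_ball] at hx
    rw [hval]
    by_contra hcon
    push_neg at hcon
    set r : ℝ := maxRad n d x with hr
    have hrk : 1/(2*(k:ℝ)) ≤ r := le_of_lt hcon
    have hr0 : 0 < r := lt_of_lt_of_le (by positivity) hrk
    have hpair : ∀ i j : Fin n, i ≠ j → 2*r ≤ pairDist n d x i j := by
      intro i j hij
      have := maxRad_le_pairDist n d x i j hij
      linarith
    have hlow : ∀ q, r ≤ x q := fun q => maxRad_le_coord n d x q
    have hhigh : ∀ q, x q ≤ 1 - r := fun q => by
      have := maxRad_le_one_sub n d x q; linarith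
    -- deviation sup
    haveI : Nonempty (Fin n × Fin d) := ⟨(i0, m0)⟩
    set D : ℝ := Finset.univ.sup' Finset.univ_nonempty (fun q : Fin n × Fin d => |x q - grid q|) with hD
    have hdev : ∀ q, |x q - grid q| ≤ D := fun q =>
      Finset.le_sup' (fun q : Fin n × Fin d => |x q - grid q|) (Finset.mem_univ q)
    have hD0 : 0 ≤ D := le_trans (abs_nonneg _) (hdev (i0, m0))
    have hDε : D < ε := by
      rw [hD]
      exact (Finset.sup'_lt_iff Finset.univ_nonempty).2
        (fun q _ => lt_of_le_of_lt (abs_apply_le_dist x grid q) hx)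
    have hε1 : ε ≤ 1/(2*(k:ℝ)*(d:ℝ)*2) := min_le_left _ _
    have hε2 : ε ≤ 1/(C+1) := min_le_right _ _
    have hDk : 2*D < 1/(k:ℝ) := by
      have h1 : D < 1/(2*(k:ℝ)*(d:ℝ)*2) := lt_of_lt_of_le hDε hε1
      have h2 : 1/(2*(k:ℝ)*(d:ℝ)*2) ≤ 1/(2*(k:ℝ)*2) := by
        apply div_le_div_of_nonneg_left (by norm_num) (by positivity)
        nlinarith
      have h3 : D < 1/(2*(k:ℝ)*2) := lt_of_lt_of_le h1 h2
      rw [lt_div_iff₀ hk0]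
      rw [lt_div_iff₀ (by positivity)] at h3
      nlinarith
    have hDd : 4*((d:ℝ)-1)*D^2 ≤ 4*r^2 := by
      have h1 : D ≤ 1/(2*(k:ℝ)*(d:ℝ)) := by
        have h2 : 1/(2*(k:ℝ)*(d:ℝ)*2) ≤ 1/(2*(k:ℝ)*(d:ℝ)) := by
          apply div_le_div_of_nonneg_left (by norm_num) (by positivity)
          nlinarith
        linarith [lt_of_lt_of_le hDε hε1]
      have h2 : D^2 ≤ (1/(2*(k:ℝ)*(d:ℝ)))^2 := by
        apply pow_le_pow_left₀ hD0 h1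
      have h3 : ((d:ℝ)-1) * D^2 ≤ (d:ℝ)^2 * (1/(2*(k:ℝ)*(d:ℝ)))^2 := by
        apply mul_le_mul (by nlinarith) h2 (sq_nonneg _) (by positivity)
      have h4 : (d:ℝ)^2 * (1/(2*(k:ℝ)*(d:ℝ)))^2 = (1/(2*(k:ℝ)))^2 := by
        field_simp
      have h5 : (1/(2*(k:ℝ)))^2 ≤ r^2 := by
        apply pow_le_pow_left₀ (by positivity) hrk
      nlinarith
    have hbig := dev_bound e grid x hgrid r D hk hrk hpair hlow hhigh hD0 hDk hDd hdev
    have hDCD : D ≤ C * D^2 := by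
      rw [hD]
      apply Finset.sup'_le
      intro q _
      calc |x q - grid q| ≤ 4*(k:ℝ)*((k:ℝ)-1)*((d:ℝ)-1)*D^2 := hbig q
        _ = C * D^2 := by rw [hC]
    have hDzero : D = 0 := by
      by_contra hDne
      have hDpos : 0 < D := lt_of_le_of_ne hD0 (Ne.symm hDne)
      have hCD : C * D < 1 := by
        have h1 : C * D < C * ε + ε := by nlinarith
        have h2 : (C+1) * ε ≤ 1 := by
          have h3 := hε2
          rw [le_div_iff₀ (by positivity : (0:ℝ) < C+1)] at h3
          linarith
        nlinarith
      nlinarith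
    have hxg : x = grid := by
      ext q
      have h1 := hdev q
      rw [hDzero] at h1
      have := abs_nonneg (x q - grid q)
      have h2 : |x q - grid q| = 0 := le_antisymm h1 this
      have := abs_eq_zero.1 h2
      linarith
    have hreq : r = 1/(2*(k:ℝ)) := by rw [hr, hxg, hval]
    rw [hreq] at hcon
    exact lt_irrefl _ hcon
  · -- Part 3 : packing fraction
    rw [hval, hn]
    push_cast
    rw [div_pow, one_pow, mul_pow]
    field_simp
end
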